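/- arXiv:1301.6387 — 2 statements merged into one kernel-verified Lean document; each statement's English description precedes it below -/
import Mathlib

section
/- Let U : ℝ^n → ℝ^d be continuously differentiable. For x ∈ ℝ^n let J(x) denote the d×n Jacobian matrix of U at x and let G(x) = det(J(x)·J(x)ᵀ) (a nonnegative real number). Then the image under U of the measure G(x)·λ^n(dx) is absolutely continuous with respect to Lebesgue measure λ^d on ℝ^d; that is, Measure.map U (λ^n with density G) ≪ λ^d. -/
open MeasureTheory Filter Set Matrix

/-- The Jacobian matrix of `U : ℝ^n → ℝ^d` at `x`. -/
noncomputable def jacobianMatrix (n d : ℕ)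
    (U : EuclideanSpace ℝ (Fin n) → EuclideanSpace ℝ (Fin d))
    (x : EuclideanSpace ℝ (Fin n)) : Matrix (Fin d) (Fin n) ℝ :=
  Matrix.of fun i j => fderiv ℝ U x (EuclideanSpace.single j 1) i

lemma fderiv_apply_eq_mulVec {n d : ℕ}
    {U : EuclideanSpace ℝ (Fin n) → EuclideanSpace ℝ (Fin d)}
    (x : EuclideanSpace ℝ (Fin n)) (v : EuclideanSpace ℝ (Fin n)) (i : Fin d) :
    fderiv ℝ U x v i = (jacobianMatrix n d U x).mulVec v i := by
  classical
  set φ := (EuclideanSpace.proj i).comp (fderiv ℝ U x) with hφ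
  have hL : fderiv ℝ U x v i = φ v := rfl
  have hv : v = ∑ j : Fin n, v j • (EuclideanSpace.basisFun (Fin n) ℝ) j := by
    have := (EuclideanSpace.basisFun (Fin n) ℝ).sum_repr v
    simp only [EuclideanSpace.basisFun_repr] at this
    exact this.symm
  rw [hL]
  conv_lhs => rw [hv]
  rw [map_sum]
  have hterm : ∀ j, φ (v j • (EuclideanSpace.basisFun (Fin n) ℝ) j)
      = v j * (jacobianMatrix n d U x) i j := by
    intro j
    rw [_root_.map_smul]
    simp only [smul_eq_mul]
    congr 1
    simp only [hφ, EuclideanSpace.basisFun_apply, ContinuousLinearMap.comp_apply]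
    rfl
  simp only [hterm]
  rw [Matrix.mulVec]
  simp [dotProduct, mul_comm]

lemma locally_null_of_invertible_deriv {E : Type*} [NormedAddCommGroup E] [NormedSpace ℝ E]
    [FiniteDimensional ℝ E] [MeasurableSpace E] [BorelSpace E]
    (μ : Measure E) [μ.IsAddHaarMeasure]
    {F : E → E} (hF : ContDiff ℝ 1 F) {N : Set E} (hN : μ N = 0)
    {x : E} {Φ : E ≃L[ℝ] E} (hΦ : HasFDerivAt F (Φ : E →L[ℝ] E) x) :
    ∃ V ∈ nhds x, μ (F ⁻¹' N ∩ V) = 0 := by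
  have hfa : ContDiffAt ℝ 1 F x := hF.contDiffAt
  have hs : HasStrictFDerivAt F (Φ : E →L[ℝ] E) x := hfa.hasStrictFDerivAt' hΦ one_ne_zero
  set g := hs.localInverse F Φ x with hg
  have hginv : ContDiffAt ℝ 1 g (F x) := hfa.to_localInverse hΦ one_ne_zero
  obtain ⟨u, hu, hgu⟩ := hginv.contDiffOn le_rfl (by simp)
  have hev : ∀ᶠ y in nhds x, g (F y) = y := hs.eventually_left_inverse
  refine ⟨{y | g (F y) = y} ∩ F ⁻¹' u, ?_, ?_⟩
  · exact Filter.inter_mem hev ((hF.continuous.continuousAt).preimage_mem_nhds hu)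
  · have hsub : F ⁻¹' N ∩ ({y | g (F y) = y} ∩ F ⁻¹' u) ⊆ g '' (N ∩ u) := by
      rintro y ⟨hyN, hyg, hyu⟩
      exact ⟨F y, ⟨hyN, hyu⟩, hyg⟩
    refine measure_mono_null hsub ?_
    exact addHaar_image_eq_zero_of_differentiableOn_of_addHaar_eq_zero μ
      ((hgu.differentiableOn one_ne_zero).mono inter_subset_right)
      (measure_mono_null inter_subset_left hN)

lemma marginal_null {d n : ℕ} {κ : Type} [Fintype κ]
    (e : Fin d ⊕ κ ≃ Fin n)
    {A : Set (EuclideanSpace ℝ (Fin d))} (hAm : MeasurableSet A) (hA : volume A = 0) :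
    volume {z : EuclideanSpace ℝ (Fin n) | (WithLp.toLp 2 (fun i => z (e (Sum.inl i))) : EuclideanSpace ℝ (Fin d)) ∈ A} = 0 := by
  classical
  have h1 : MeasurePreserving ((MeasurableEquiv.toLp 2 (Fin n → ℝ)).symm) volume volume :=
    EuclideanSpace.volume_preserving_symm_measurableEquiv_toLp (Fin n)
  have h2 : MeasurePreserving ((MeasurableEquiv.piCongrLeft (fun _ : Fin n => ℝ) e).symm)
      volume volume :=
    MeasurePreserving.symm _
      (MeasureTheory.volume_measurePreserving_piCongrLeft (fun _ : Fin n => ℝ) e)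
  have h3 : MeasurePreserving (MeasurableEquiv.sumPiEquivProdPi (fun _ : Fin d ⊕ κ => ℝ))
      volume volume :=
    MeasurePreserving.symm _
      (MeasureTheory.volume_measurePreserving_sumPiEquivProdPi_symm (fun _ : Fin d ⊕ κ => ℝ))
  set Θ : EuclideanSpace ℝ (Fin n) → (Fin d → ℝ) × (κ → ℝ) :=
    (MeasurableEquiv.sumPiEquivProdPi (fun _ : Fin d ⊕ κ => ℝ)) ∘
      ((MeasurableEquiv.piCongrLeft (fun _ : Fin n => ℝ) e).symm) ∘
      ((MeasurableEquiv.toLp 2 (Fin n → ℝ)).symm) with hΘ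
  have hmp : MeasurePreserving Θ volume volume := (h3.comp h2).comp h1
  set A' : Set (Fin d → ℝ) := (MeasurableEquiv.toLp 2 (Fin d → ℝ)) ⁻¹' A with hA'
  have hA'm : MeasurableSet A' := (MeasurableEquiv.toLp 2 (Fin d → ℝ)).measurable hAm
  have hA'0 : volume A' = 0 := by
    show volume ((MeasurableEquiv.toLp 2 (Fin d → ℝ)).symm.symm ⁻¹' A) = 0
    rw [(MeasurePreserving.symm _
      (EuclideanSpace.volume_preserving_symm_measurableEquiv_toLp (Fin d))).measure_preimage
      hAm.nullMeasurableSet]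
    exact hA
  have hset : {z : EuclideanSpace ℝ (Fin n) | (WithLp.toLp 2 (fun i => z (e (Sum.inl i))) : EuclideanSpace ℝ (Fin d)) ∈ A}
      = Θ ⁻¹' (A' ×ˢ (Set.univ : Set (κ → ℝ))) := by
    ext z
    simp only [Set.mem_setOf_eq, Set.mem_preimage, Set.mem_prod, Set.mem_univ, and_true]
    constructor
    · intro h; exact h
    · intro h; exact h
  rw [hset, hmp.measure_preimage (hA'm.prod MeasurableSet.univ).nullMeasurableSet]
  rw [Measure.volume_eq_prod, Measure.prod_prod, hA'0, zero_mul]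

lemma per_embedding_null {n d : ℕ} {κ : Type} [Fintype κ]
    {U : EuclideanSpace ℝ (Fin n) → EuclideanSpace ℝ (Fin d)} (hU : ContDiff ℝ 1 U)
    (g : Fin d ↪ Fin n) (e : Fin d ⊕ κ ≃ Fin n) (he1 : ∀ i, e (Sum.inl i) = g i)
    {A : Set (EuclideanSpace ℝ (Fin d))} (hAm : MeasurableSet A) (hA : volume A = 0) :
    volume {x : EuclideanSpace ℝ (Fin n) |
      ((jacobianMatrix n d U x).submatrix id ⇑g).det ≠ 0 ∧ U x ∈ A} = 0 := by
  classical
  let L₀ : (EuclideanSpace ℝ (Fin d) × EuclideanSpace ℝ (Fin n)) →ₗ[ℝ] EuclideanSpace ℝ (Fin n) :=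
    { toFun := fun p =>
        (WithLp.toLp 2 (fun k => Sum.elim (fun i => p.1 i) (fun j : κ => p.2 (e (Sum.inr j))) (e.symm k)) :
          EuclideanSpace ℝ (Fin n))
      map_add' := by
        intro p q
        ext k
        cases hk : e.symm k <;>
          simp [hk, PiLp.add_apply, Prod.fst_add, Prod.snd_add]
      map_smul' := by
        intro c p
        ext k
        cases hk : e.symm k <;>
          simp [hk, PiLp.smul_apply, Prod.smul_fst, Prod.smul_snd] }
  let L := L₀.toContinuousLinearMap
  set F : EuclideanSpace ℝ (Fin n) → EuclideanSpace ℝ (Fin n) := fun x => L (U x, x) with hF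
  have hFc : ContDiff ℝ 1 F := L.contDiff.comp (ContDiff.prodMk hU contDiff_id)
  set N : Set (EuclideanSpace ℝ (Fin n)) :=
    {z : EuclideanSpace ℝ (Fin n) | (WithLp.toLp 2 (fun i => z (e (Sum.inl i))) : EuclideanSpace ℝ (Fin d)) ∈ A} with hN
  have hN0 : volume N = 0 := marginal_null e hAm hA
  have hsubN : {x : EuclideanSpace ℝ (Fin n) |
      ((jacobianMatrix n d U x).submatrix id ⇑g).det ≠ 0 ∧ U x ∈ A} ⊆ F ⁻¹' N := by
    intro y hy
    have hFy : ∀ i, F y (e (Sum.inl i)) = U y i := by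
      intro i
      show Sum.elim (fun i => U y i) (fun j : κ => y (e (Sum.inr j))) (e.symm (e (Sum.inl i)))
        = U y i
      rw [Equiv.symm_apply_apply]
      rfl
    simp only [hN, Set.mem_preimage, Set.mem_setOf_eq]
    simp only [hFy]
    exact hy.2
  apply measure_null_of_locally_null
  intro x hx
  have hdiff : DifferentiableAt ℝ U x := (hU.differentiable one_ne_zero) x
  set DU := fderiv ℝ U x with hDU
  set Φ : EuclideanSpace ℝ (Fin n) →L[ℝ] EuclideanSpace ℝ (Fin n) :=
    L.comp (DU.prod (ContinuousLinearMap.id ℝ (EuclideanSpace ℝ (Fin n)))) with hΦdef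
  have hΦ : HasFDerivAt F Φ x :=
    L.hasFDerivAt.comp x (hdiff.hasFDerivAt.prodMk (hasFDerivAt_id x))
  have hker : ∀ v : EuclideanSpace ℝ (Fin n), Φ v = 0 → v = 0 := by
    intro v hv
    have h0 : ∀ k, Sum.elim (fun i => DU v i) (fun j : κ => v (e (Sum.inr j))) (e.symm k) = 0 := by
      intro k
      have : Φ v k = (0 : EuclideanSpace ℝ (Fin n)) k := by rw [hv]
      exact this
    have hv2 : ∀ j : κ, v (e (Sum.inr j)) = 0 := by
      intro j
      have := h0 (e (Sum.inr j))
      rwa [Equiv.symm_apply_apply] at this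
    have hv1 : ∀ i, DU v i = 0 := by
      intro i
      have := h0 (e (Sum.inl i))
      rwa [Equiv.symm_apply_apply] at this
    have hmv : ((jacobianMatrix n d U x).submatrix id ⇑g).mulVec (fun i' => v (g i')) = 0 := by
      funext i
      have hfd : (jacobianMatrix n d U x).mulVec v i = 0 := by
        rw [← fderiv_apply_eq_mulVec]
        exact hv1 i
      have hsum : (jacobianMatrix n d U x).mulVec v i
          = ∑ s : Fin d ⊕ κ, (jacobianMatrix n d U x) i (e s) * v (e s) := by
        rw [Matrix.mulVec, dotProduct]
        exact (Equiv.sum_comp e (fun k => (jacobianMatrix n d U x) i k * v k)).symm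
      rw [Fintype.sum_sum_type] at hsum
      have hzero : ∑ j : κ, (jacobianMatrix n d U x) i (e (Sum.inr j)) * v (e (Sum.inr j)) = 0 :=
        Finset.sum_eq_zero fun j _ => by rw [hv2 j, mul_zero]
      have hmain : ∑ i' : Fin d, (jacobianMatrix n d U x) i (g i') * v (g i') = 0 := by
        rw [hzero, add_zero] at hsum
        rw [← hfd, hsum]
        exact Finset.sum_congr rfl fun i' _ => by rw [he1]
      show (∑ i' : Fin d, (jacobianMatrix n d U x).submatrix id ⇑g i i' * v (g i'))
        = (0 : Fin d → ℝ) i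
      simpa [Matrix.submatrix_apply] using hmain
    have hwinj : Function.Injective ((jacobianMatrix n d U x).submatrix id ⇑g).mulVec :=
      Matrix.mulVec_injective_iff_isUnit.2 ((Matrix.isUnit_iff_isUnit_det _).2 hx.1.isUnit)
    have hw0 : (fun i' => v (g i')) = 0 := by
      apply hwinj
      rw [hmv, Matrix.mulVec_zero]
    ext k
    have hk : k = e (e.symm k) := (Equiv.apply_symm_apply e k).symm
    rw [hk]
    cases hs : e.symm k with
    | inl i => rw [he1]; exact congrFun hw0 i
    | inr j => exact hv2 j
  have hinj : Function.Injective Φ := by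
    intro a b hab
    have h1 : Φ (a - b) = 0 := by rw [map_sub, hab, sub_self]
    exact sub_eq_zero.1 (hker _ h1)
  have hsurj : Function.Surjective Φ :=
    (LinearMap.injective_iff_surjective
      (f := (Φ : EuclideanSpace ℝ (Fin n) →ₗ[ℝ] EuclideanSpace ℝ (Fin n)))).1 hinj
  let ΦE : EuclideanSpace ℝ (Fin n) ≃ₗ[ℝ] EuclideanSpace ℝ (Fin n) :=
    LinearEquiv.ofBijective (Φ : EuclideanSpace ℝ (Fin n) →ₗ[ℝ] EuclideanSpace ℝ (Fin n))
      ⟨hinj, hsurj⟩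
  let CLE := ΦE.toContinuousLinearEquiv
  have hcoe : (CLE : EuclideanSpace ℝ (Fin n) →L[ℝ] EuclideanSpace ℝ (Fin n)) = Φ := by
    ext v; rfl
  have hΦ' : HasFDerivAt F (CLE : EuclideanSpace ℝ (Fin n) →L[ℝ] EuclideanSpace ℝ (Fin n)) x := by
    rw [hcoe]; exact hΦ
  obtain ⟨V, hV, hV0⟩ := locally_null_of_invertible_deriv volume hFc hN0 hΦ'
  refine ⟨_ ∩ V, inter_mem_nhdsWithin _ hV, ?_⟩
  exact measure_mono_null (Set.inter_subset_inter_left V hsubN) hV0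


lemma exists_minor_det_ne_zero {d n : ℕ} (M : Matrix (Fin d) (Fin n) ℝ)
    (h : (M * Mᵀ).det ≠ 0) :
    ∃ g : Fin d ↪ Fin n, (M.submatrix id ⇑g).det ≠ 0 := by
  classical
  have hrank : M.rank = d := by
    have h1 : (M * Mᵀ).rank = d := by
      rw [Matrix.rank_of_isUnit _ ((Matrix.isUnit_iff_isUnit_det _).2 h.isUnit)]
      simp
    rw [← Matrix.rank_self_mul_transpose, h1]
  have hspan : Submodule.span ℝ (Set.range Mᵀ) = ⊤ := by
    apply Submodule.eq_top_of_finrank_eq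
    show Module.finrank ℝ (Submodule.span ℝ (Set.range M.col)) = _
    rw [← Matrix.rank_eq_finrank_span_cols, hrank]
    simp
  obtain ⟨b, hbs, hbspan, hbli⟩ := exists_linearIndependent ℝ (Set.range Mᵀ)
  rw [hspan] at hbspan
  let bas : Module.Basis b ℝ (Fin d → ℝ) := Module.Basis.mk hbli (by rw [Subtype.range_coe, hbspan])
  haveI : Fintype b := FiniteDimensional.fintypeBasisIndex bas
  have hcard : Fintype.card b = d := by
    have := Module.finrank_eq_card_basis bas
    simp at this
    rw [← Nat.card_coe_set_eq, Nat.card_eq_fintype_card] at this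
    omega
  let e0 : Fin d ≃ b := (Fintype.equivFinOfCardEq hcard).symm
  have hchoice : ∀ y : b, ∃ j : Fin n, Mᵀ j = (y : Fin d → ℝ) := fun y => hbs y.2
  choose g0 hg0 using hchoice
  have hli : LinearIndependent ℝ (fun i : Fin d => Mᵀ (g0 (e0 i))) := by
    have heq : (fun i : Fin d => Mᵀ (g0 (e0 i))) = (fun y : b => (y : Fin d → ℝ)) ∘ e0 := by
      funext i; simp [hg0]
    rw [heq]
    exact hbli.comp e0 e0.injective
  have hginj : Function.Injective fun i => g0 (e0 i) := by
    intro i j hij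
    exact hli.injective (by simp only [hij])
  refine ⟨⟨fun i => g0 (e0 i), hginj⟩, ?_⟩
  have hUnit : IsUnit (M.submatrix id fun i => g0 (e0 i)) := by
    rw [← Matrix.linearIndependent_cols_iff_isUnit]
    exact hli
  exact ((Matrix.isUnit_iff_isUnit_det _).1 hUnit).ne_zero

/-- **EID for the flat structure.** For `U : ℝ^n → ℝ^d` of class `C¹`,
the image under `U` of the measure `det(J(x)·J(x)ᵀ)·λⁿ(dx)` is absolutely continuous
with respect to Lebesgue measure on `ℝ^d`. -/
theorem energy_image_density_flat (n d : ℕ)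
    (U : EuclideanSpace ℝ (Fin n) → EuclideanSpace ℝ (Fin d))
    (hU : ContDiff ℝ 1 U) :
    Measure.map U
        (volume.withDensity fun x =>
          ENNReal.ofReal (jacobianMatrix n d U x * (jacobianMatrix n d U x).transpose).det)
      ≪ (volume : Measure (EuclideanSpace ℝ (Fin d))) := by
  classical
  have hJcont : Continuous fun x => jacobianMatrix n d U x := by
    apply continuous_matrix
    intro i j
    exact (EuclideanSpace.proj i).continuous.comp
      ((hU.continuous_fderiv one_ne_zero).clm_apply continuous_const)
  have hdet : Continuous fun x =>
      (jacobianMatrix n d U x * (jacobianMatrix n d U x).transpose).det :=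
    (hJcont.matrix_mul hJcont.matrix_transpose).matrix_det
  have hUm : Measurable U := hU.continuous.measurable
  refine Measure.AbsolutelyContinuous.mk ?_
  intro A hAm hA0
  rw [Measure.map_apply hUm hAm, withDensity_apply _ (hUm hAm)]
  have key : volume {x : EuclideanSpace ℝ (Fin n) |
      (jacobianMatrix n d U x * (jacobianMatrix n d U x).transpose).det ≠ 0 ∧ U x ∈ A} = 0 := by
    have hsub : {x : EuclideanSpace ℝ (Fin n) |
        (jacobianMatrix n d U x * (jacobianMatrix n d U x).transpose).det ≠ 0 ∧ U x ∈ A}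
        ⊆ ⋃ g : Fin d ↪ Fin n, {x : EuclideanSpace ℝ (Fin n) |
          ((jacobianMatrix n d U x).submatrix id ⇑g).det ≠ 0 ∧ U x ∈ A} := by
      intro x hx
      obtain ⟨g, hg⟩ := exists_minor_det_ne_zero _ hx.1
      exact Set.mem_iUnion.2 ⟨g, hg, hx.2⟩
    refine measure_mono_null hsub (measure_iUnion_null fun g => ?_)
    haveI : Fintype {k : Fin n // k ∉ Set.range ⇑g} := Fintype.ofFinite _
    let e : Fin d ⊕ {k : Fin n // k ∉ Set.range ⇑g} ≃ Fin n :=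
      (Equiv.sumCongr (Equiv.ofInjective ⇑g g.injective)
        (Equiv.refl {k : Fin n // k ∉ Set.range ⇑g})).trans
        (Equiv.sumCompl (fun k => k ∈ Set.range ⇑g))
    have he1 : ∀ i, e (Sum.inl i) = g i := by intro i; simp [e]
    exact per_embedding_null hU g e he1 hAm hA0
  have hnmem : ∀ᵐ x ∂(volume : Measure (EuclideanSpace ℝ (Fin n))),
      x ∉ {x : EuclideanSpace ℝ (Fin n) |
        (jacobianMatrix n d U x * (jacobianMatrix n d U x).transpose).det ≠ 0 ∧ U x ∈ A} :=
    measure_eq_zero_iff_ae_notMem.mp key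
  have hae : (fun x => ENNReal.ofReal
      (jacobianMatrix n d U x * (jacobianMatrix n d U x).transpose).det)
      =ᵐ[volume.restrict (U ⁻¹' A)] 0 := by
    rw [EventuallyEq, ae_restrict_iff' (hUm hAm)]
    filter_upwards [hnmem] with x hx hxA
    have hdet0 : (jacobianMatrix n d U x * (jacobianMatrix n d U x).transpose).det = 0 := by
      by_contra h
      exact hx ⟨h, hxA⟩
    simp [hdet0]
  rw [lintegral_congr_ae hae]
  simp
end

section
/- Let n ≥ 1 and let r : Fin n → ℝ and θ : Fin n → ℝ. Suppose there exist indices i ≠ j with r(i) ≠ 0, r(j) ≠ 0, and sin(θ(i) − θ(j)) ≠ 0. Then the determinant of the 2×2 real matrix Σ_{k} r(k)²·M(θ(k)) is strictly positive. -/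
open Real

/-- `M θ = [[sin²θ, cosθ·sinθ], [cosθ·sinθ, cos²θ]]`. -/
noncomputable def M (θ : ℝ) : Matrix (Fin 2) (Fin 2) ℝ :=
  !![sin θ ^ 2, cos θ * sin θ; cos θ * sin θ, cos θ ^ 2]

/-- Lagrange identity for finite sums. -/
lemma lagrange_aux {n : ℕ} (u v : Fin n → ℝ) :
    ∑ k, ∑ l, (u k * v l - u l * v k) ^ 2
      = 2 * ((∑ k, u k ^ 2) * (∑ k, v k ^ 2) - (∑ k, u k * v k) ^ 2) := by
  have step : ∑ k, ∑ l, (u k * v l - u l * v k) ^ 2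
      = ∑ k, ∑ l, (u k ^ 2 * v l ^ 2 + v k ^ 2 * u l ^ 2
          - 2 * ((u k * v k) * (u l * v l))) := by
    refine Finset.sum_congr rfl fun k _ => Finset.sum_congr rfl fun l _ => ?_
    ring
  rw [step]
  simp only [Finset.sum_sub_distrib, Finset.sum_add_distrib, ← Finset.mul_sum]
  rw [← Finset.sum_mul, ← Finset.sum_mul, ← Finset.sum_mul, ← sq]
  ring

/-- If among the terms of `Σ_k r(k)²·M(θ(k))` there are two indices
`i ≠ j` with `r i ≠ 0`, `r j ≠ 0` and `sin (θ i − θ j) ≠ 0`, then the determinant of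
the sum is strictly positive. -/
theorem det_sum_smul_M_pos (n : ℕ) (hn : 1 ≤ n) (r θ : Fin n → ℝ)
    (h : ∃ i j : Fin n, i ≠ j ∧ r i ≠ 0 ∧ r j ≠ 0 ∧ sin (θ i - θ j) ≠ 0) :
    0 < (∑ k, r k ^ 2 • M (θ k)).det := by
  obtain ⟨i, j, hij, hri, hrj, hs⟩ := h
  set u : Fin n → ℝ := fun k => r k * sin (θ k) with hu
  set v : Fin n → ℝ := fun k => r k * cos (θ k) with hv
  have hdet : (∑ k, r k ^ 2 • M (θ k)).det
      = (∑ k, u k ^ 2) * (∑ k, v k ^ 2) - (∑ k, u k * v k) ^ 2 := by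
    simp only [Matrix.det_fin_two, Matrix.sum_apply, Matrix.smul_apply, M,
      Matrix.cons_val', Matrix.cons_val_zero, Matrix.cons_val_one, Matrix.head_cons,
      Matrix.empty_val', Matrix.cons_val_fin_one, Matrix.head_fin_const,
      smul_eq_mul, hu, hv]
    norm_num
    have e1 : ∑ k, r k ^ 2 * sin (θ k) ^ 2 = ∑ k, (r k * sin (θ k)) ^ 2 :=
      Finset.sum_congr rfl fun k _ => by ring
    have e2 : ∑ k, r k ^ 2 * cos (θ k) ^ 2 = ∑ k, (r k * cos (θ k)) ^ 2 :=
      Finset.sum_congr rfl fun k _ => by ring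
    have e3 : ∑ k, r k ^ 2 * (cos (θ k) * sin (θ k))
        = ∑ k, (r k * sin (θ k)) * (r k * cos (θ k)) :=
      Finset.sum_congr rfl fun k _ => by ring
    rw [e1, e2, e3]; ring
  have key : 0 < ∑ k, ∑ l, (u k * v l - u l * v k) ^ 2 := by
    have ht : (u i * v j - u j * v i) ^ 2 > 0 := by
      have : u i * v j - u j * v i = r i * r j * sin (θ i - θ j) := by
        simp only [hu, hv, Real.sin_sub]; ring
      rw [this]
      positivity
    have h1 : (u i * v j - u j * v i) ^ 2 ≤ ∑ l, (u i * v l - u l * v i) ^ 2 :=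
      Finset.single_le_sum (f := fun l => (u i * v l - u l * v i) ^ 2)
        (fun l _ => sq_nonneg _) (Finset.mem_univ j)
    have h2 : ∑ l, (u i * v l - u l * v i) ^ 2
        ≤ ∑ k, ∑ l, (u k * v l - u l * v k) ^ 2 :=
      Finset.single_le_sum (f := fun k => ∑ l, (u k * v l - u l * v k) ^ 2)
        (fun k _ => Finset.sum_nonneg fun l _ => sq_nonneg _) (Finset.mem_univ i)
    linarith
  rw [lagrange_aux u v] at key
  linarith [hdet, key]
end
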